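/- Let Q and R be real symmetric n×n matrices with −Q ∈ [q₁, q₂]·I, i.e. q₁ I ⪯ −Q ⪯ q₂ I, where q₂ ≥ q₁ > 0, and R positive semidefinite and rank-deficient (i.e. there exists a nonzero v with Rv = 0). Let λ > 0. Then the function ψ(α) = det((α+λ)(αI + Q) + R) has a root α > 0. -/

import Mathlib

open Matrix

/-- Auxiliary: a real symmetric PSD matrix with nonzero determinant dominates `ε • 1`
for some positive `ε` (take `ε` = the smallest eigenvalue). -/
lemma aux_exists_eps_sub_smul_one_posSemidef (n : ℕ) (hn : 0 < n)
    (A : Matrix (Fin n) (Fin n) ℝ) (hA : A.PosSemidef) (hdet : A.det ≠ 0) :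
    ∃ ε : ℝ, 0 < ε ∧ (A - ε • (1 : Matrix (Fin n) (Fin n) ℝ)).PosSemidef := by
  have hH : A.IsHermitian := hA.1
  have hev : ∀ i, 0 < hH.eigenvalues i := by
    intro i
    refine lt_of_le_of_ne (hA.eigenvalues_nonneg i) (Ne.symm ?_)
    intro h0
    apply hdet
    rw [hH.det_eq_prod_eigenvalues]
    exact Finset.prod_eq_zero (Finset.mem_univ i) (by simp [← h0])
  haveI : Nonempty (Fin n) := ⟨⟨0, hn⟩⟩
  obtain ⟨i₀, -, hmin⟩ := Finset.exists_min_image Finset.univ hH.eigenvalues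
    ⟨⟨0, hn⟩, Finset.mem_univ _⟩
  set ε := hH.eigenvalues i₀ with hε
  refine ⟨ε, hev i₀, ?_⟩
  set U : Matrix (Fin n) (Fin n) ℝ := (hH.eigenvectorUnitary : Matrix (Fin n) (Fin n) ℝ)
  have hU : U * star U = 1 := (Matrix.mem_unitaryGroup_iff).mp hH.eigenvectorUnitary.2
  have key : A - ε • (1 : Matrix (Fin n) (Fin n) ℝ)
      = U * (Matrix.diagonal (fun i => hH.eigenvalues i - ε)) * star U := by
    have hspec := hH.spectral_theorem
    have h1 : ε • (1 : Matrix (Fin n) (Fin n) ℝ)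
        = U * (ε • (1 : Matrix (Fin n) (Fin n) ℝ)) * star U := by
      rw [Matrix.mul_smul, Matrix.smul_mul, Matrix.mul_one, hU]
    calc A - ε • (1 : Matrix (Fin n) (Fin n) ℝ)
        = U * (Matrix.diagonal (RCLike.ofReal ∘ hH.eigenvalues)
            - ε • (1 : Matrix (Fin n) (Fin n) ℝ)) * star U := by
          rw [Matrix.mul_sub, Matrix.sub_mul, ← h1]
          conv_lhs => rw [hspec]
          rfl
      _ = U * (Matrix.diagonal (fun i => hH.eigenvalues i - ε)) * star U := by
          rw [Matrix.smul_one_eq_diagonal, Matrix.diagonal_sub]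
          rfl
  rw [key]
  have hdiag : (Matrix.diagonal (fun i => hH.eigenvalues i - ε)).PosSemidef :=
    Matrix.posSemidef_diagonal_iff.mpr fun i => sub_nonneg.mpr (hmin i (Finset.mem_univ i))
  simpa [Matrix.star_eq_conjTranspose] using hdiag.mul_mul_conjTranspose_same U

/-- For real symmetric `Q` with `q₁ I ⪯ -Q ⪯ q₂ I` (`q₂ ≥ q₁ > 0`),
`R` positive semidefinite and rank-deficient, and `λ > 0`, the function
`ψ(α) = det((α+λ)(αI+Q)+R)` has a root `α > 0`. -/
theorem exists_pos_root_of_negdef_Q_rank_deficient_R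
    (n : ℕ) (Q R : Matrix (Fin n) (Fin n) ℝ)
    (hQ : Qᵀ = Q) (hR : Rᵀ = R)
    (q₁ q₂ : ℝ) (hq₁ : 0 < q₁) (hq₁₂ : q₁ ≤ q₂)
    (hlow : ((-Q) - q₁ • (1 : Matrix (Fin n) (Fin n) ℝ)).PosSemidef)
    (hhigh : (q₂ • (1 : Matrix (Fin n) (Fin n) ℝ) - (-Q)).PosSemidef)
    (hRpsd : R.PosSemidef)
    (hRdef : ∃ v : Fin n → ℝ, v ≠ 0 ∧ R.mulVec v = 0)
    (lam : ℝ) (hlam : 0 < lam) :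
    ∃ α : ℝ, 0 < α ∧
      ((α + lam) • (α • (1 : Matrix (Fin n) (Fin n) ℝ) + Q) + R).det = 0 := by
  classical
  obtain ⟨v, hv, hRv⟩ := hRdef
  have hn : 0 < n := by
    rcases Nat.eq_zero_or_pos n with h | h
    · exfalso; apply hv; subst h; funext i; exact i.elim0
    · exact h
  set D : ℝ → Matrix (Fin n) (Fin n) ℝ :=
    fun α => (α + lam) • (α • (1 : Matrix (Fin n) (Fin n) ℝ) + Q) + R with hD
  -- quadratic form formula
  have hqf : ∀ (w : Fin n → ℝ) (α : ℝ),
      w ⬝ᵥ (D α) *ᵥ w = (α + lam) * (α * (w ⬝ᵥ w) + w ⬝ᵥ Q *ᵥ w) + w ⬝ᵥ R *ᵥ w := by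
    intro w α
    simp [hD, Matrix.add_mulVec, Matrix.smul_mulVec, dotProduct_add, dotProduct_smul,
      Matrix.one_mulVec, smul_eq_mul, mul_add]
  -- bounds on the quadratic form of Q
  have hQup : ∀ w : Fin n → ℝ, w ⬝ᵥ Q *ᵥ w ≤ -q₁ * (w ⬝ᵥ w) := by
    intro w
    have := hlow.dotProduct_mulVec_nonneg w
    simp only [star_trivial, Matrix.sub_mulVec, Matrix.neg_mulVec, Matrix.smul_mulVec,
      Matrix.one_mulVec, dotProduct_sub, dotProduct_neg, dotProduct_smul, smul_eq_mul] at this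
    linarith
  have hQdown : ∀ w : Fin n → ℝ, -q₂ * (w ⬝ᵥ w) ≤ w ⬝ᵥ Q *ᵥ w := by
    intro w
    have := hhigh.dotProduct_mulVec_nonneg w
    simp only [star_trivial, Matrix.sub_mulVec, Matrix.neg_mulVec, Matrix.smul_mulVec,
      Matrix.one_mulVec, dotProduct_sub, dotProduct_neg, dotProduct_smul, smul_eq_mul] at this
    linarith
  have hRnn : ∀ w : Fin n → ℝ, 0 ≤ w ⬝ᵥ R *ᵥ w := by
    intro w; simpa using hRpsd.dotProduct_mulVec_nonneg w
  have hdotnn : ∀ w : Fin n → ℝ, 0 ≤ w ⬝ᵥ w := fun w =>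
    Finset.sum_nonneg fun i _ => mul_self_nonneg (w i)
  have hvv : 0 < v ⬝ᵥ v := by
    rcases lt_or_eq_of_le (hdotnn v) with h | h
    · exact h
    · exact absurd (dotProduct_self_eq_zero.mp h.symm) hv
  -- hermitian-ness of D α
  have hherm : ∀ α : ℝ, (D α).IsHermitian := by
    intro α
    have : (D α)ᵀ = D α := by
      simp [hD, Matrix.transpose_add, Matrix.transpose_smul, hQ, hR]
    exact (Matrix.conjTranspose_eq_transpose_of_trivial _).trans this
  -- the set S
  set S : Set ℝ := {α | q₁ / 2 ≤ α ∧ ∀ w : Fin n → ℝ, 0 ≤ w ⬝ᵥ (D α) *ᵥ w} with hS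
  have hSclosed : IsClosed S := by
    have : S = {α | q₁ / 2 ≤ α} ∩ ⋂ w : Fin n → ℝ,
        {α | 0 ≤ (α + lam) * (α * (w ⬝ᵥ w) + w ⬝ᵥ Q *ᵥ w) + w ⬝ᵥ R *ᵥ w} := by
      ext α
      simp only [hS, Set.mem_setOf_eq, Set.mem_inter_iff, Set.mem_iInter]
      constructor
      · rintro ⟨h1, h2⟩; exact ⟨h1, fun w => by rw [← hqf]; exact h2 w⟩
      · rintro ⟨h1, h2⟩; exact ⟨h1, fun w => by rw [hqf]; exact h2 w⟩
    rw [this]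
    refine (isClosed_le continuous_const continuous_id).inter (isClosed_iInter fun w => ?_)
    refine isClosed_le continuous_const ?_
    fun_prop
  have hSne : q₂ ∈ S := by
    refine ⟨le_trans (by linarith) hq₁₂, fun w => ?_⟩
    rw [hqf]
    have h1 : 0 ≤ q₂ * (w ⬝ᵥ w) + w ⬝ᵥ Q *ᵥ w := by
      have := hQdown w; linarith
    have h2 : 0 < q₂ + lam := by linarith
    have := hRnn w
    nlinarith
  have hSbdd : BddBelow S := ⟨q₁ / 2, fun x hx => hx.1⟩
  set α' : ℝ := sInf S with hα'
  have hmem : α' ∈ S := hSclosed.csInf_mem ⟨q₂, hSne⟩ hSbdd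
  -- members of S are at least q₁
  have hge : ∀ β ∈ S, q₁ ≤ β := by
    intro β hβ
    by_contra hlt
    push_neg at hlt
    have h0 : 0 < β + lam := by have := hβ.1; linarith
    have hneg : v ⬝ᵥ (D β) *ᵥ v < 0 := by
      rw [hqf, hRv]
      have h1 : β * (v ⬝ᵥ v) + v ⬝ᵥ Q *ᵥ v < 0 := by
        have := hQup v; nlinarith
      simpa using mul_neg_of_pos_of_neg h0 h1
    exact absurd (hβ.2 v) (not_le.mpr hneg)
  have hα'q₁ : q₁ ≤ α' := hge α' hmem
  have hα'pos : 0 < α' := lt_of_lt_of_le hq₁ hα'q₁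
  refine ⟨α', hα'pos, ?_⟩
  by_contra hdet
  -- D α' is PSD with nonzero det
  have hpsd : (D α').PosSemidef := Matrix.PosSemidef.of_dotProduct_mulVec_nonneg (hherm α') fun w => by simpa using hmem.2 w
  obtain ⟨ε, hεpos, hεpsd⟩ := aux_exists_eps_sub_smul_one_posSemidef n hn (D α') hpsd hdet
  -- choose δ
  have hden : 0 < 2 * α' + lam := by linarith
  set δ : ℝ := min (ε / (2 * α' + lam)) (α' - q₁ / 2) / 2 with hδ
  have hδpos : 0 < δ := by
    apply div_pos _ two_pos
    exact lt_min (div_pos hεpos hden) (by linarith)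
  have hδ1 : δ * (2 * α' + lam) ≤ ε := by
    have h1 : δ ≤ ε / (2 * α' + lam) := le_trans (by linarith [min_le_left (ε / (2 * α' + lam)) (α' - q₁ / 2), hδpos]) (le_refl _)
    calc δ * (2 * α' + lam) ≤ (ε / (2 * α' + lam)) * (2 * α' + lam) := by
          apply mul_le_mul_of_nonneg_right h1 (le_of_lt hden)
      _ = ε := div_mul_cancel₀ ε (ne_of_gt hden)
  have hδ2 : q₁ / 2 ≤ α' - δ := by
    have h1 := min_le_right (ε / (2 * α' + lam)) (α' - q₁ / 2)
    rw [hδ]; linarith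
  -- α' - δ ∈ S : contradiction
  have hmem' : α' - δ ∈ S := by
    refine ⟨hδ2, fun w => ?_⟩
    have hε' : 0 ≤ w ⬝ᵥ (D α') *ᵥ w - ε * (w ⬝ᵥ w) := by
      have := hεpsd.dotProduct_mulVec_nonneg w
      simp only [star_trivial, Matrix.sub_mulVec, Matrix.smul_mulVec, Matrix.one_mulVec,
        dotProduct_sub, dotProduct_smul, smul_eq_mul] at this
      linarith
    rw [hqf] at hε' ⊢
    have hQw := hQup w
    have hw : 0 ≤ w ⬝ᵥ w := hdotnn w
    nlinarith [hδ1, hδpos, mul_nonneg (le_of_lt hδpos) hw,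
      mul_nonneg (mul_nonneg (le_of_lt hδpos) hw) (le_of_lt hq₁)]
  have : α' ≤ α' - δ := csInf_le hSbdd hmem'
  linarith
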